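/- arXiv:2406.18789 — 4 statements merged into one kernel-verified Lean document; each statement's English description precedes it below -/
import Mathlib

section
/- Let C ⊆ ℝⁿ be a polytope and f convex and differentiable on an open set containing C. For all x ∈ C \ X* and all S ∈ S(x), max_{a ∈ S, w ∈ C} ⟨∇f(x), a - w⟩ ≥ (f(x) - f*)/v(X*, x), where v is the vertex distance. -/
open Topology Filter

theorem grad_le' {E : Type*} [NormedAddCommGroup E] [NormedSpace ℝ E] {C : Set E}
    {f : E → ℝ} {f' : E →L[ℝ] ℝ} {x z : E} (hconv : ConvexOn ℝ C f)
    (hx : x ∈ C) (hz : z ∈ C) (hd : HasFDerivAt f f' x) :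
    f' (z - x) ≤ f z - f x := by
  set g : ℝ → ℝ := fun t => f (x + t • (z - x)) with hg
  have hmap : HasDerivAt (fun t : ℝ => x + t • (z - x)) (z - x) 0 := by
    simpa using ((hasDerivAt_id (0:ℝ)).smul_const (z - x)).const_add x
  have hg0 : HasDerivAt g (f' (z - x)) 0 :=
    HasFDerivAt.comp_hasDerivAt 0 (by simpa using hd) hmap
  have ht : Filter.Tendsto (slope g 0) (𝓝[>] 0) (𝓝 (f' (z - x))) :=
    (hasDerivAt_iff_tendsto_slope.mp hg0).mono_left
      (nhdsWithin_mono 0 (fun t ht => ne_of_gt ht))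
  refine le_of_tendsto ht ?_
  filter_upwards [Ioc_mem_nhdsGT_of_mem (Set.mem_Ico.mpr ⟨le_refl 0, one_pos⟩)] with t ht
  obtain ⟨ht0, ht1⟩ := ht
  have hconvpt : g t ≤ (1 - t) * f x + t * f z := by
    have h := hconv.2 hx hz (by linarith : (0:ℝ) ≤ 1 - t) ht0.le (by ring)
    have he : (1 - t) • x + t • z = x + t • (z - x) := by
      rw [smul_sub]; module
    rw [he] at h
    simpa [hg] using h
  have hgz : g 0 = f x := by simp [hg]
  rw [slope_def_field, hgz, sub_zero, div_le_iff₀ ht0]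
  nlinarith



/-- `min {γ ≥ 0 : y - x = γ (w - u) for some w ∈ C and u ∈ T}`. -/
noncomputable def stepDist {E : Type*} [NormedAddCommGroup E] [NormedSpace ℝ E]
    (C T : Set E) (y x : E) : ℝ :=
  sInf {γ : ℝ | 0 ≤ γ ∧ ∃ w ∈ C, ∃ u ∈ T, y - x = γ • (w - u)}

/-- The collection `S(x)` of supports of convex-combination representations of `x`
by the vertices in `V`. -/
def supports {E : Type*} [NormedAddCommGroup E] [NormedSpace ℝ E]
    (V : Finset E) (x : E) : Set (Set E) :=
  {S | ∃ w : E → ℝ, (∀ v, 0 ≤ w v) ∧ (∑ v ∈ V, w v) = 1 ∧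
    (∑ v ∈ V, w v • v) = x ∧ S = {v | v ∈ V ∧ 0 < w v}}

/-- The vertex distance. -/
noncomputable def vertexDist {E : Type*} [NormedAddCommGroup E] [NormedSpace ℝ E]
    (V : Finset E) (C : Set E) (y x : E) : ℝ :=
  sSup {g : ℝ | ∃ S ∈ supports V x, g = stepDist C (convexHull ℝ S) y x}

theorem mem_hull_of_supports {E : Type*} [NormedAddCommGroup E] [NormedSpace ℝ E]
    {V : Finset E} {x : E} {S : Set E} (hS : S ∈ supports V x) :
    x ∈ convexHull ℝ S := by
  obtain ⟨w, hw0, hw1, hwx, rfl⟩ := hS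
  set T := V.filter (fun v => 0 < w v) with hT
  have hsum : ∑ v ∈ T, w v = 1 := by
    rw [hT, Finset.sum_filter_of_ne (fun v _ hv => (hw0 v).lt_of_ne (Ne.symm hv))]
    exact hw1
  have hpt : ∑ v ∈ T, w v • v = x := by
    rw [hT, Finset.sum_filter_of_ne]
    · exact hwx
    · intro v _ hv
      rcases (hw0 v).lt_or_eq with h | h
      · exact h
      · exact absurd (by rw [← h, zero_smul]) hv
  have := T.centerMass_mem_convexHull (w := w) (z := id)
    (s := {v | v ∈ V ∧ 0 < w v})
    (fun i hi => hw0 i)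
    (by rw [hsum]; exact one_pos)
    (fun i hi => by
      rw [hT, Finset.mem_filter] at hi
      exact ⟨hi.1, hi.2⟩)
  rwa [Finset.centerMass, hsum, inv_one, one_smul, show (∑ v ∈ T, w v • id v) = x from hpt]
    at this

/-- Scaling lemma for the vertex distance: for `x ∈ C \ X*` and `S ∈ S(x)`,
`max_{a ∈ S, w ∈ C} ⟨∇f(x), a - w⟩ ≥ (f(x) - f*) / v(X*, x)`. -/
theorem stmt10 {E : Type*} [NormedAddCommGroup E] [NormedSpace ℝ E]
    (V : Finset E) (C : Set E) (hC : C = convexHull ℝ (V : Set E)) (hCne : C.Nonempty)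
    (hV : (V : Set E) = Set.extremePoints ℝ C)
    (f : E → ℝ) (f' : E → E →L[ℝ] ℝ) (hdiff : ∀ x ∈ C, HasFDerivAt f (f' x) x)
    (hconv : ConvexOn ℝ C f)
    (fstar : ℝ) (hfstar : IsLeast (f '' C) fstar)
    (Xstar : Set E) (hXstar : Xstar = {z ∈ C | f z = fstar}) :
    ∀ x ∈ C, x ∉ Xstar → ∀ S ∈ supports V x,
      sSup {t : ℝ | ∃ a ∈ S, ∃ w ∈ C, t = f' x (a - w)} ≥
        (f x - fstar) / sInf {d : ℝ | ∃ z ∈ Xstar, d = vertexDist V C z x} := by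
  intro x hxC hxX S hSsup
  set Mset := {t : ℝ | ∃ a ∈ S, ∃ w ∈ C, t = f' x (a - w)} with hMsetDef
  set M := sSup Mset with hMDef
  have hSV : S ⊆ (V : Set E) := by
    obtain ⟨wt, -, -, -, rfl⟩ := hSsup
    exact fun v hv => hv.1
  have hxS : x ∈ convexHull ℝ S := mem_hull_of_supports hSsup
  have hVC : (V : Set E) ⊆ C := by rw [hC]; exact subset_convexHull ℝ _
  have hCconv : Convex ℝ C := hC ▸ convex_convexHull ℝ _
  obtain ⟨R, hR⟩ : ∃ R, ∀ y ∈ C, ‖y‖ ≤ R := by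
    have : Bornology.IsBounded C :=
      hC ▸ ((V : Set E).toFinite.isCompact_convexHull ℝ).isBounded
    exact isBounded_iff_forall_norm_le.mp this
  have hbddM : BddAbove Mset := by
    refine ⟨‖f' x‖ * (R + R), ?_⟩
    rintro t ⟨a, haS, w, hwC, rfl⟩
    have h1 : ‖a - w‖ ≤ R + R := by
      have := hR a (hVC (hSV haS)); have := hR w hwC
      calc ‖a - w‖ ≤ ‖a‖ + ‖w‖ := norm_sub_le a w
        _ ≤ R + R := by linarith
    calc f' x (a - w) ≤ ‖f' x (a - w)‖ := le_abs_self _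
      _ ≤ ‖f' x‖ * ‖a - w‖ := (f' x).le_opNorm _
      _ ≤ ‖f' x‖ * (R + R) := by
          exact mul_le_mul_of_nonneg_left h1 (norm_nonneg _)
  -- key inequality
  have key : ∀ z ∈ C, ∀ γ : ℝ, 0 ≤ γ → ∀ w ∈ C, ∀ u ∈ convexHull ℝ S,
      z - x = γ • (w - u) → f x - f z ≤ γ * M := by
    intro z hzC γ hγ w hwC u huS heq
    have hgrad : f' x (z - x) ≤ f z - f x := grad_le' hconv hxC hzC (hdiff x hxC)
    have hu : f' x u - f' x w ≤ M := by
      have hsub : convexHull ℝ S ⊆ {p | f' x p ≤ M + f' x w} := by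
        refine convexHull_min (fun a haS => ?_)
          (convex_halfSpace_le (f' x).toLinearMap.isLinear _)
        have h1 : f' x (a - w) ≤ M := le_csSup hbddM ⟨a, haS, w, hwC, rfl⟩
        rw [map_sub] at h1
        show f' x a ≤ M + f' x w
        linarith
      have h2 : f' x u ≤ M + f' x w := hsub huS
      linarith
    have hxz : x - z = γ • (u - w) := by
      rw [show u - w = -(w - u) by abel, smul_neg, ← heq]; abel
    have hval : f' x (x - z) = γ * (f' x u - f' x w) := by
      rw [hxz, map_smul, map_sub]; rfl
    have hneg : f' x (x - z) = - f' x (z - x) := by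
      rw [show x - z = -(z - x) by abel, map_neg]
    have hmul : γ * (f' x u - f' x w) ≤ γ * M := mul_le_mul_of_nonneg_left hu hγ
    linarith [hval, hneg, hgrad, hmul]
  obtain ⟨z0, hz0C, hz0f⟩ := hfstar.1
  have hz0X : z0 ∈ Xstar := hXstar ▸ ⟨hz0C, hz0f⟩
  have hxfs : fstar < f x := by
    rcases (hfstar.2 ⟨x, hxC, rfl⟩).lt_or_eq with h | h
    · exact h
    · exact absurd (hXstar ▸ ⟨hxC, h.symm⟩) hxX
  have hMpos : 0 < M := by
    have := key z0 hz0C 1 zero_le_one z0 hz0C x hxS (by simp)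
    rw [hz0f] at this; linarith
  -- stepDist bounds
  have hstep_mem : ∀ z ∈ C, ∀ S' ∈ supports V x,
      (1 : ℝ) ∈ {γ : ℝ | 0 ≤ γ ∧ ∃ w ∈ C, ∃ u ∈ convexHull ℝ S', z - x = γ • (w - u)} :=
    fun z hzC S' hS' => ⟨zero_le_one, z, hzC, x, mem_hull_of_supports hS', by simp⟩
  have hstep_le_one : ∀ z ∈ C, ∀ S' ∈ supports V x,
      stepDist C (convexHull ℝ S') z x ≤ 1 := fun z hzC S' hS' =>
    csInf_le ⟨0, fun γ hγ => hγ.1⟩ (hstep_mem z hzC S' hS')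
  have hvd : ∀ z ∈ Xstar, (f x - fstar) / M ≤ vertexDist V C z x := by
    intro z hzX
    have hzX' := hXstar ▸ hzX
    obtain ⟨hzC, hzf⟩ : z ∈ C ∧ f z = fstar := hzX'
    have hstep : (f x - fstar) / M ≤ stepDist C (convexHull ℝ S) z x := by
      refine le_csInf ⟨1, hstep_mem z hzC S hSsup⟩ ?_
      rintro γ ⟨hγ0, w, hwC, u, huS, heq⟩
      rw [div_le_iff₀ hMpos]
      have := key z hzC γ hγ0 w hwC u huS heq
      rw [hzf] at this; linarith
    refine hstep.trans (le_csSup ?_ ⟨S, hSsup, rfl⟩)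
    exact ⟨1, by rintro g ⟨S', hS', rfl⟩; exact hstep_le_one z hzC S' hS'⟩
  have hD : (f x - fstar) / M ≤ sInf {d : ℝ | ∃ z ∈ Xstar, d = vertexDist V C z x} := by
    refine le_csInf ⟨_, z0, hz0X, rfl⟩ ?_
    rintro d ⟨z, hzX, rfl⟩
    exact hvd z hzX
  have hDpos : 0 < sInf {d : ℝ | ∃ z ∈ Xstar, d = vertexDist V C z x} :=
    lt_of_lt_of_le (div_pos (by linarith) hMpos) hD
  rw [ge_iff_le, div_le_iff₀ hDpos]
  rw [div_le_iff₀ hMpos] at hD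
  nlinarith [hD]
end

section
/- Let C ⊆ ℝⁿ be a polytope and f convex and differentiable on an open set containing C. Suppose (C, f) satisfies the (μ, θ)-error bound relative to the vertex distance v for μ > 0 and θ ∈ [0, 1/2]. Then for all x ∈ C and all S ∈ S(x), max_{a ∈ S, w ∈ C} ⟨∇f(x), a - w⟩ ≥ μ^θ (f(x) - f*)^{1-θ}. -/
/-- Gradient inequality for convex functions. -/
lemma grad_ineq_aux {E : Type*} [NormedAddCommGroup E] [NormedSpace ℝ E]
    {C : Set E} {f : E → ℝ} {φ : E →L[ℝ] ℝ} {x z : E}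
    (hconv : ConvexOn ℝ C f) (hx : x ∈ C) (hz : z ∈ C)
    (hd : HasFDerivAt f φ x) : φ (z - x) ≤ f z - f x := by
  set g : ℝ → E := fun t : ℝ => x + t • (z - x) with hgdef
  have h1 : HasDerivAt g (z - x) 0 := by
    simpa [hgdef] using ((hasDerivAt_id (0 : ℝ)).smul_const (z - x)).const_add x
  have hd' : HasFDerivAt f φ (g 0) := by simpa [hgdef] using hd
  have hg : HasDerivAt (f ∘ g) (φ (z - x)) 0 := hd'.comp_hasDerivAt 0 h1
  rw [hasDerivAt_iff_tendsto_slope] at hg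
  have hg' : Filter.Tendsto (slope (f ∘ g) 0) (nhdsWithin 0 (Set.Ioi 0)) (nhds (φ (z - x))) :=
    hg.mono_left (nhdsWithin_mono 0 (fun t ht => ne_of_gt ht))
  refine le_of_tendsto hg' ?_
  filter_upwards [Ioo_mem_nhdsGT (zero_lt_one)] with t ht
  have ht0 : 0 < t := ht.1
  have ht1 : t < 1 := ht.2
  have hcx : f (g t) ≤ (1 - t) * f x + t * f z := by
    have heq : (1 - t) • x + t • z = g t := by
      simp only [hgdef]; module
    have := hconv.2 hx hz (by linarith : (0:ℝ) ≤ 1 - t) ht0.le (by ring)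
    rw [heq] at this
    simpa [smul_eq_mul] using this
  have hg0 : (f ∘ g) 0 = f x := by simp [hgdef]
  have hslope : slope (f ∘ g) 0 t = (f (g t) - f x) / t := by
    rw [slope_def_field, hg0]; simp [Function.comp]
  rw [hslope, div_le_iff₀ ht0]
  nlinarith

/-- If `(C, f)` satisfies the `(μ, θ)`-error bound relative to the vertex distance,
then for all `x ∈ C` and `S ∈ S(x)`,
`max_{a ∈ S, w ∈ C} ⟨∇f(x), a - w⟩ ≥ μ^θ (f(x) - f*)^{1-θ}`. -/
theorem stmt11 {E : Type*} [NormedAddCommGroup E] [NormedSpace ℝ E]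
    (V : Finset E) (C : Set E) (hC : C = convexHull ℝ (V : Set E)) (hCne : C.Nonempty)
    (hV : (V : Set E) = Set.extremePoints ℝ C)
    (f : E → ℝ) (f' : E → E →L[ℝ] ℝ) (hdiff : ∀ x ∈ C, HasFDerivAt f (f' x) x)
    (hconv : ConvexOn ℝ C f)
    (fstar : ℝ) (hfstar : IsLeast (f '' C) fstar)
    (Xstar : Set E) (hXstar : Xstar = {z ∈ C | f z = fstar})
    (μ θ : ℝ) (hμ : 0 < μ) (hθ : θ ∈ Set.Icc (0 : ℝ) (1 / 2))
    (heb : ∀ x ∈ C,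
      ((f x - fstar) / μ) ^ θ ≥ sInf {d : ℝ | ∃ z ∈ Xstar, d = vertexDist V C z x}) :
    ∀ x ∈ C, ∀ S ∈ supports V x,
      sSup {t : ℝ | ∃ a ∈ S, ∃ w ∈ C, t = f' x (a - w)} ≥
        μ ^ θ * (f x - fstar) ^ (1 - θ) := by
  intro x hx S hS
  set φ : E →L[ℝ] ℝ := f' x with hφdef
  obtain ⟨w0, hw0, hw1, hwx, hSdef⟩ := hS
  -- basic facts
  have hVC : (V : Set E) ⊆ C := by rw [hV]; exact extremePoints_subset
  have hSV : S ⊆ (V : Set E) := by rw [hSdef]; exact fun v hv => hv.1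
  have hSC : S ⊆ C := hSV.trans hVC
  have hSne : S.Nonempty := by
    by_contra hcon
    rw [Set.not_nonempty_iff_eq_empty] at hcon
    have hz : ∀ v ∈ V, w0 v = 0 := by
      intro v hv
      by_contra hne
      have hpos : 0 < w0 v := lt_of_le_of_ne (hw0 v) (Ne.symm hne)
      have : v ∈ S := by rw [hSdef]; exact ⟨hv, hpos⟩
      simp [hcon] at this
    have : (∑ v ∈ V, w0 v) = 0 := Finset.sum_eq_zero hz
    rw [hw1] at this; norm_num at this
  have hVne : V.Nonempty := by
    obtain ⟨a, ha⟩ := hSne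
    exact ⟨a, hSV ha⟩
  -- x ∈ convexHull ℝ S
  have hxS : x ∈ convexHull ℝ S := by
    set t := V.filter (fun v => 0 < w0 v) with htdef
    have hsum : (∑ v ∈ t, w0 v) = 1 := by
      rw [htdef, Finset.sum_filter_of_ne (fun v _ hne => lt_of_le_of_ne (hw0 v) (Ne.symm hne))]
      exact hw1
    have hsum2 : (∑ v ∈ t, w0 v • v) = x := by
      rw [htdef, Finset.sum_filter_of_ne]
      · exact hwx
      · intro v _ hne
        by_contra hc
        push_neg at hc
        have : w0 v = 0 := le_antisymm hc (hw0 v)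
        simp [this] at hne
    have hmem : t.centerMass w0 id ∈ convexHull ℝ S := by
      apply Finset.centerMass_mem_convexHull
      · intro v _; exact hw0 v
      · rw [hsum]; norm_num
      · intro v hv
        rw [htdef, Finset.mem_filter] at hv
        rw [hSdef]; exact ⟨hv.1, hv.2⟩
    rwa [Finset.centerMass_eq_of_sum_1 _ _ hsum, show (∑ v ∈ t, w0 v • id v) = x by simpa using hsum2] at hmem
  -- φ is convex and concave on univ
  have hφconv : ConvexOn ℝ (Set.univ : Set E) φ :=
    ⟨convex_univ, fun a _ b _ p q _ _ _ => by simp [map_add, map_smul]⟩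
  have hφconc : ConcaveOn ℝ (Set.univ : Set E) φ :=
    ⟨convex_univ, fun a _ b _ p q _ _ _ => by simp [map_add, map_smul]⟩
  -- the target set and its properties
  set T := {t : ℝ | ∃ a ∈ S, ∃ w ∈ C, t = φ (a - w)} with hTdef
  have hTbdd : BddAbove T := by
    refine ⟨V.sup' hVne φ - V.inf' hVne φ, ?_⟩
    rintro t ⟨a, haS, w, hwC, rfl⟩
    have h1 : φ a ≤ V.sup' hVne φ := Finset.le_sup' φ (hSV haS)
    have h2 : V.inf' hVne φ ≤ φ w := by
      have hw' : w ∈ convexHull ℝ (V : Set E) := by rwa [← hC]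
      obtain ⟨v, hvV, hle⟩ := hφconc.exists_le_of_mem_convexHull (Set.subset_univ _) hw'
      exact le_trans (Finset.inf'_le φ hvV) hle
    rw [map_sub]
    linarith
  set M := sSup T with hMdef
  have hmemM : ∀ t ∈ T, t ≤ M := fun t ht => le_csSup hTbdd ht
  have hM0 : (0 : ℝ) ≤ M := by
    obtain ⟨a, haS⟩ := hSne
    exact le_trans (le_of_eq (by simp)) (hmemM (φ (a - a)) ⟨a, haS, a, hSC haS, rfl⟩)
  -- Δ := f x - fstar ≥ 0
  have hΔ0 : 0 ≤ f x - fstar := by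
    have := hfstar.2 ⟨x, hx, rfl⟩
    linarith
  set Δ := f x - fstar with hΔdef
  rcases eq_or_lt_of_le hΔ0 with hΔz | hΔpos
  · -- Δ = 0 : RHS is 0
    have h1θ : (0:ℝ) < 1 - θ := by have := hθ.2; linarith
    rw [ge_iff_le, ← hΔz, Real.zero_rpow h1θ.ne', mul_zero]
    exact hM0
  · -- Δ > 0
    set B := (Δ / μ) ^ θ with hBdef
    have hB : 0 < B := Real.rpow_pos_of_pos (div_pos hΔpos hμ) θ
    have key : ∀ ε : ℝ, 0 < ε → Δ ≤ M * (B + ε) := by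
      intro ε hε
      set D := {d : ℝ | ∃ z ∈ Xstar, d = vertexDist V C z x} with hDdef
      have hDne : D.Nonempty := by
        obtain ⟨z0, hz0C, hz0f⟩ := hfstar.1
        exact ⟨vertexDist V C z0 x, z0, by rw [hXstar]; exact ⟨hz0C, hz0f⟩, rfl⟩
      obtain ⟨d, hdD, hdlt⟩ := Real.lt_sInf_add_pos hDne (half_pos hε)
      obtain ⟨z, hzX, rfl⟩ := hdD
      have hzC : z ∈ C := by rw [hXstar] at hzX; exact hzX.1
      have hzf : f z = fstar := by rw [hXstar] at hzX; exact hzX.2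
      have hdB : vertexDist V C z x < B + ε / 2 := by
        have := heb x hx
        rw [← hDdef] at this
        calc vertexDist V C z x < sInf D + ε / 2 := hdlt
          _ ≤ B + ε / 2 := by exact add_le_add_left this _
      -- stepDist ≤ vertexDist
      have hstep : stepDist C (convexHull ℝ S) z x ≤ vertexDist V C z x := by
        set VS := {g : ℝ | ∃ S' ∈ supports V x, g = stepDist C (convexHull ℝ S') z x} with hVSdef
        have himg : VS = (fun S' => stepDist C (convexHull ℝ S') z x) '' (supports V x) := by
          ext g
          constructor
          · rintro ⟨S', h1, h2⟩; exact ⟨S', h1, h2.symm⟩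
          · rintro ⟨S', h1, h2⟩; exact ⟨S', h1, h2.symm⟩
        have hfin : VS.Finite := by
          rw [himg]
          apply Set.Finite.image
          apply Set.Finite.subset (V.finite_toSet.finite_subsets)
          rintro S' ⟨w', _, _, _, hS'⟩
          rw [hS']; exact fun v hv => hv.1
        exact le_csSup hfin.bddAbove ⟨S, ⟨w0, hw0, hw1, hwx, hSdef⟩, rfl⟩
      set G := {γ : ℝ | 0 ≤ γ ∧ ∃ w ∈ C, ∃ u ∈ convexHull ℝ S, z - x = γ • (w - u)} with hGdef
      have hGne : G.Nonempty := ⟨1, zero_le_one, z, hzC, x, hxS, by simp⟩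
      have hsG : stepDist C (convexHull ℝ S) z x = sInf G := rfl
      obtain ⟨γ, hγG, hγlt⟩ := Real.lt_sInf_add_pos hGne (half_pos hε)
      have hγB : γ < B + ε := by
        rw [← hsG] at hγlt
        linarith
      obtain ⟨hγ0, w, hwC, u, huS, hzxw⟩ := hγG
      rcases eq_or_lt_of_le hγ0 with hγz | hγpos
      · exfalso
        rw [← hγz, zero_smul] at hzxw
        have hzx : z = x := sub_eq_zero.mp hzxw
        rw [hzx] at hzf
        rw [hΔdef] at hΔpos
        linarith
      · have hgrad := grad_ineq_aux hconv hx hzC (hdiff x hx)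
        rw [hzxw, map_smul, smul_eq_mul] at hgrad
        -- γ * φ (w - u) ≤ f z - f x = -Δ
        have hΔle : Δ ≤ γ * φ (u - w) := by
          have : φ (u - w) = -φ (w - u) := by rw [map_sub, map_sub]; ring
          rw [this]
          rw [hzf] at hgrad
          nlinarith
        obtain ⟨a, haS, hau⟩ := hφconv.exists_ge_of_mem_convexHull (Set.subset_univ S) huS
        have hφle : φ (u - w) ≤ M := by
          have h1 : φ (u - w) ≤ φ (a - w) := by rw [map_sub, map_sub]; linarith
          exact le_trans h1 (hmemM _ ⟨a, haS, w, hwC, rfl⟩)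
        calc Δ ≤ γ * φ (u - w) := hΔle
          _ ≤ γ * M := by
              apply mul_le_mul_of_nonneg_left hφle hγ0
          _ ≤ (B + ε) * M := mul_le_mul_of_nonneg_right hγB.le hM0
          _ = M * (B + ε) := by ring
    rw [ge_iff_le]
    clear_value M B Δ T
    clear hmemM hTbdd hTdef heb hdiff hconv hxS hφconv hφconc hSdef hwx hw1 hw0 hSne hSV hSC hVC hVne hV hC hCne hXstar hfstar
    have hBeq : μ ^ θ * Δ ^ (1 - θ) * B = Δ := by
      have h1 : Δ ^ (1 - θ) * Δ ^ θ = Δ := by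
        rw [← Real.rpow_add hΔpos]; norm_num
      have h2 : B = Δ ^ θ / μ ^ θ := by rw [hBdef]; exact Real.div_rpow hΔ0 hμ.le θ
      have hμθ : (0:ℝ) < μ ^ θ := Real.rpow_pos_of_pos hμ θ
      calc μ ^ θ * Δ ^ (1 - θ) * B = μ ^ θ * Δ ^ (1 - θ) * (Δ ^ θ / μ ^ θ) := by rw [h2]
        _ = (Δ ^ (1 - θ) * Δ ^ θ) * (μ ^ θ / μ ^ θ) := by ring
        _ = Δ := by rw [h1, div_self hμθ.ne', mul_one]
    have hMpos : 0 < M := by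
      have := key 1 one_pos
      nlinarith
    have hfinal : Δ ≤ M * B := by
      by_contra hcon
      push_neg at hcon
      have hε : 0 < (Δ - M * B) / (2 * M) := div_pos (by linarith) (by linarith)
      have := key _ hε
      have heq : M * (B + (Δ - M * B) / (2 * M)) = M * B + (Δ - M * B) / 2 := by
        field_simp
      rw [heq] at this
      linarith
    exact le_of_mul_le_mul_right (by rw [hBeq]; exact hfinal) hB
end

section
/- Let ℝⁿ be endowed with a norm and C ⊆ ℝⁿ a nonempty polytope. Then for all x, y ∈ C, ‖y - x‖ ≥ f(y, x) · Φ̄(F(y), C), where f is the face distance f(y, x) = min{γ ≥ 0 : y - x = γ(w - u) for some w ∈ C and u ∈ F(x)}, and Φ̄ is the outer facial distance. -/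
/-- Distance between two sets: `min_{a ∈ A, b ∈ B} ‖a - b‖`. -/
noncomputable def setDist' {E : Type*} [NormedAddCommGroup E] [NormedSpace ℝ E]
    (A B : Set E) : ℝ :=
  sInf {d : ℝ | ∃ a ∈ A, ∃ b ∈ B, d = ‖a - b‖}

/-- The minimal face of `C` containing `y` (faces of a polytope are its nonempty
extreme subsets). -/
def minFace {E : Type*} [NormedAddCommGroup E] [NormedSpace ℝ E]
    (C : Set E) (y : E) : Set E :=
  ⋂₀ {F : Set E | IsExtreme ℝ C F ∧ y ∈ F}

/-- The face distance
`f(y, x) = min {γ ≥ 0 : y - x = γ (w - u), w ∈ C, u ∈ F(x)}`. -/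
noncomputable def faceDist {E : Type*} [NormedAddCommGroup E] [NormedSpace ℝ E]
    (C : Set E) (y x : E) : ℝ :=
  sInf {γ : ℝ | 0 ≤ γ ∧ ∃ w ∈ C, ∃ u ∈ minFace C x, y - x = γ • (w - u)}

/-- The outer facial distance
`Φ̄(F, C) = min {dist(G, H) : G ∈ faces(F), H ∈ faces(C), G ∩ H = ∅}`. -/
noncomputable def outerFacial {E : Type*} [NormedAddCommGroup E] [NormedSpace ℝ E]
    (F C : Set E) : ℝ :=
  sInf {d : ℝ | ∃ G H : Set E, IsExtreme ℝ F G ∧ G.Nonempty ∧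
    IsExtreme ℝ C H ∧ H.Nonempty ∧ G ∩ H = ∅ ∧ d = setDist' G H}

section Aux
variable {E : Type*} [NormedAddCommGroup E] [NormedSpace ℝ E] {C : Set E} {x p : E}

lemma mem_minFace_self : x ∈ minFace C x := fun _ hF => hF.2

lemma minFace_subset_of_isExtreme {F : Set E} (hF : IsExtreme ℝ C F) (hx : x ∈ F) :
    minFace C x ⊆ F := Set.sInter_subset_of_mem ⟨hF, hx⟩

lemma minFace_subset (hx : x ∈ C) : minFace C x ⊆ C :=
  minFace_subset_of_isExtreme IsExtreme.rfl hx

lemma isExtreme_minFace (hx : x ∈ C) : IsExtreme ℝ C (minFace C x) :=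
  isExtreme_sInter ⟨C, IsExtreme.rfl, hx⟩ (fun _ hF => hF.1)

/-- The "beyond" description of the minimal face. -/
def auxD (C : Set E) (x : E) : Set E := {p | p ∈ C ∧ ∃ ε : ℝ, 0 < ε ∧ x + ε • (x - p) ∈ C}

lemma mem_auxD_self (hx : x ∈ C) : x ∈ auxD C x :=
  ⟨hx, 1, one_pos, by simpa using hx⟩

lemma mem_auxD_of_comb (hC : Convex ℝ C) {a r : E} (ha : a ∈ C) (hr : r ∈ C) {α : ℝ}
    (h0 : 0 < α) (h1 : α < 1) (hxeq : x = α • a + (1 - α) • r) : a ∈ auxD C x := by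
  refine ⟨ha, α / (1 - α), div_pos h0 (by linarith), ?_⟩
  have h1' : (1 : ℝ) - α ≠ 0 := by linarith
  have heq : x + (α / (1 - α)) • (x - a) = r := by
    rw [hxeq]; match_scalars <;> field_simp <;> ring
  rw [heq]; exact hr

lemma shrink_mem (hC : Convex ℝ C) (hx : x ∈ C) {ε δ : ℝ} (hδ : 0 < δ) (hδε : δ ≤ ε)
    (h : x + ε • (x - p) ∈ C) : x + δ • (x - p) ∈ C := by
  have hε : 0 < ε := lt_of_lt_of_le hδ hδε
  have key : x + δ • (x - p) = (1 - δ / ε) • x + (δ / ε) • (x + ε • (x - p)) := by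
    match_scalars <;> field_simp <;> ring
  rw [key]
  exact hC hx h (by rw [sub_nonneg]; exact div_le_one_of_le₀ hδε hε.le)
    (le_of_lt (div_pos hδ hε)) (by ring)

lemma auxD_side (hC : Convex ℝ C) {a b : E} (ha : a ∈ C) (hb : b ∈ C) (hp : p ∈ auxD C x)
    {s t : ℝ} (hs : 0 < s) (ht : 0 < t) (hst : s + t = 1) (hseg : s • a + t • b = p) :
    a ∈ auxD C x := by
  obtain ⟨hpC, ε, hε, hq⟩ := hp
  have ht' : t = 1 - s := by linarith
  subst ht'
  have hs1 : s < 1 := by linarith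
  have h1 : (0:ℝ) < 1 + ε := by linarith
  have h2 : (0:ℝ) < 1 + ε * (1 - s) := by nlinarith
  have hr : (1 / (1 + ε * (1 - s))) • (x + ε • (x - p)) + (ε * (1 - s) / (1 + ε * (1 - s))) • b ∈ C := by
    refine hC hq hb (by positivity) (by positivity) ?_
    field_simp [h2.ne']
  refine mem_auxD_of_comb hC ha hr (α := ε * s / (1 + ε)) (by positivity) ?_ ?_
  · rw [div_lt_one h1]; nlinarith
  · rw [← hseg]
    match_scalars
    all_goals field_simp [h1.ne', h2.ne']
    all_goals try ring
    all_goals (right; ring)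

lemma isExtreme_auxD (hC : Convex ℝ C) (hx : x ∈ C) : IsExtreme ℝ C (auxD C x) := by
  refine ⟨fun p hp => hp.1, ?_⟩
  rintro a ha b hb p hp ⟨s, t, hs, ht, hst, hseg⟩
  exact auxD_side hC ha hb hp hs ht hst hseg

lemma minFace_eq_auxD (hC : Convex ℝ C) (hx : x ∈ C) : minFace C x = auxD C x := by
  apply subset_antisymm
  · exact minFace_subset_of_isExtreme (isExtreme_auxD hC hx) (mem_auxD_self hx)
  · rintro p ⟨hpC, ε, hε, hq⟩ F hF
    have h1 : (0:ℝ) < 1 + ε := by linarith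
    have hseg : x ∈ openSegment ℝ p (x + ε • (x - p)) := by
      refine ⟨ε / (1 + ε), 1 / (1 + ε), by positivity, by positivity, by field_simp; ring, ?_⟩
      match_scalars <;> field_simp <;> ring
    exact hF.1.2 hpC hq hF.2 hseg

lemma minFace_beyond (hC : Convex ℝ C) (hx : x ∈ C) (hp : p ∈ minFace C x) :
    ∃ ε : ℝ, 0 < ε ∧ x + ε • (x - p) ∈ C :=
  ((minFace_eq_auxD hC hx) ▸ hp).2

lemma minFace_convex (hC : Convex ℝ C) (hx : x ∈ C) : Convex ℝ (minFace C x) := by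
  rw [minFace_eq_auxD hC hx]
  rintro p ⟨hpC, ε₁, hε₁, h₁⟩ q ⟨hqC, ε₂, hε₂, h₂⟩ a b ha hb hab
  refine ⟨hC hpC hqC ha hb hab, min ε₁ ε₂, lt_min hε₁ hε₂, ?_⟩
  have e1 : x + (min ε₁ ε₂) • (x - p) ∈ C :=
    shrink_mem hC hx (lt_min hε₁ hε₂) (min_le_left _ _) h₁
  have e2 : x + (min ε₁ ε₂) • (x - q) ∈ C :=
    shrink_mem hC hx (lt_min hε₁ hε₂) (min_le_right _ _) h₂
  have hb' : b = 1 - a := by linarith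
  subst hb'
  have key : x + (min ε₁ ε₂) • (x - (a • p + (1 - a) • q))
      = a • (x + (min ε₁ ε₂) • (x - p)) + (1 - a) • (x + (min ε₁ ε₂) • (x - q)) := by
    match_scalars <;> ring
  rw [key]
  exact hC e1 e2 ha hb (by ring)

lemma minFace_eq_hull (V : Finset E) (hCV : C = convexHull ℝ (V : Set E)) (hx : x ∈ C) :
    minFace C x = convexHull ℝ ((V : Set E) ∩ minFace C x) := by
  have hconv : Convex ℝ C := hCV ▸ convex_convexHull ℝ _
  classical
  apply subset_antisymm
  · intro z hz
    have hzC : z ∈ C := minFace_subset hx hz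
    rw [hCV] at hzC
    obtain ⟨w, hw0, hw1, hwz⟩ := Finset.mem_convexHull'.1 hzC
    have key : ∀ v ∈ V, w v ≠ 0 → v ∈ minFace C x := by
      intro v hv hwv
      have hvC : v ∈ C := hCV ▸ subset_convexHull ℝ (V : Set E) hv
      have hwvpos : 0 < w v := (hw0 v hv).lt_of_ne (Ne.symm hwv)
      have hwvle : w v ≤ 1 := hw1 ▸ Finset.single_le_sum (fun i hi => hw0 i hi) hv
      rcases eq_or_lt_of_le hwvle with hone | hlt
      · -- z = v
        have hsum0 : ∑ v' ∈ V.erase v, w v' = 0 := by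
          have h := Finset.add_sum_erase V w hv
          linarith
        have hrest : ∀ v' ∈ V.erase v, w v' = 0 :=
          (Finset.sum_eq_zero_iff_of_nonneg
            (fun i hi => hw0 i (Finset.mem_of_mem_erase hi))).1 hsum0
        have hzv : z = v := by
          rw [← hwz, ← Finset.add_sum_erase V _ hv,
            Finset.sum_eq_zero (fun i hi => by rw [hrest i hi, zero_smul]), hone]
          simp
        exact hzv ▸ hz
      · -- 0 < w v < 1 : use extremeness
        have h1w : (0:ℝ) < 1 - w v := by linarith
        set r := (1 - w v)⁻¹ • (z - w v • v) with hr_def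
        have hsum1 : ∑ v' ∈ V.erase v, w v' = 1 - w v := by
          have h := Finset.add_sum_erase V w hv
          linarith
        have hsumv : ∑ v' ∈ V.erase v, w v' • v' = z - w v • v := by
          have h := Finset.add_sum_erase V (fun v' => w v' • v') hv
          rw [hwz] at h
          exact by rw [← h]; abel
        have hrC : r ∈ C := by
          rw [hCV, Finset.mem_convexHull']
          refine ⟨fun v' => if v' = v then 0 else w v' / (1 - w v), ?_, ?_, ?_⟩
          · intro y hy
            by_cases h : y = v
            · simp [h]
            · simp only [if_neg h]
              exact div_nonneg (hw0 y hy) h1w.le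
          · have e1 : ∑ v' ∈ V.erase v, (if v' = v then (0:ℝ) else w v' / (1 - w v))
                = ∑ v' ∈ V.erase v, w v' / (1 - w v) :=
              Finset.sum_congr rfl (fun i hi => by rw [if_neg (Finset.ne_of_mem_erase hi)])
            have e2 : ∑ v' ∈ V, (if v' = v then (0:ℝ) else w v' / (1 - w v)) = 1 := by
              rw [← Finset.add_sum_erase V _ hv, if_pos rfl, zero_add, e1,
                ← Finset.sum_div, hsum1, div_self h1w.ne']
            simpa using e2
          · have e1 : ∑ v' ∈ V.erase v, (if v' = v then (0:ℝ) else w v' / (1 - w v)) • v'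
                = ∑ v' ∈ V.erase v, (1 - w v)⁻¹ • (w v' • v') :=
              Finset.sum_congr rfl (fun i hi => by
                rw [if_neg (Finset.ne_of_mem_erase hi), div_eq_inv_mul, mul_smul])
            have e2 : ∑ v' ∈ V, (if v' = v then (0:ℝ) else w v' / (1 - w v)) • v' = r := by
              rw [← Finset.add_sum_erase V _ hv, if_pos rfl, zero_smul, zero_add, e1,
                ← Finset.smul_sum, hsumv]
            simpa using e2
        have hseg : z ∈ openSegment ℝ v r := by
          refine ⟨w v, 1 - w v, hwvpos, h1w, by ring, ?_⟩
          rw [hr_def, smul_inv_smul₀ h1w.ne']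
          abel
        exact (isExtreme_minFace hx).2 hvC hrC hz hseg
    -- now z ∈ hull of the filtered set
    have hzmem : z ∈ convexHull ℝ ((V.filter (fun v => w v ≠ 0) : Finset E) : Set E) := by
      rw [Finset.mem_convexHull']
      refine ⟨w, fun y hy => hw0 y (Finset.mem_of_mem_filter y hy), ?_, ?_⟩
      · rw [Finset.sum_filter_ne_zero]; exact hw1
      · rw [← hwz]
        apply Finset.sum_subset (Finset.filter_subset _ _)
        intro i hi hni
        simp only [Finset.mem_filter, hi, true_and, not_not] at hni
        rw [hni, zero_smul]
    refine convexHull_mono ?_ hzmem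
    intro v hv
    simp only [Finset.coe_filter, Set.mem_setOf_eq] at hv
    exact ⟨hv.1, key v hv.1 hv.2⟩
  · exact convexHull_min Set.inter_subset_right (minFace_convex hconv hx)


lemma setDist'_nonneg {E : Type*} [NormedAddCommGroup E] [NormedSpace ℝ E]
    (A B : Set E) : 0 ≤ setDist' A B :=
  Real.sInf_nonneg (by rintro d ⟨a, _, b, _, rfl⟩; exact norm_nonneg _)

end Aux

/-- For all `x, y` in a polytope `C`: `‖y - x‖ ≥ f(y, x) · Φ̄(F(y), C)`. -/
theorem stmt13 {E : Type*} [NormedAddCommGroup E] [NormedSpace ℝ E]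
    (V : Finset E) (C : Set E) (hC : C = convexHull ℝ (V : Set E)) (hCne : C.Nonempty) :
    ∀ x ∈ C, ∀ y ∈ C,
      ‖y - x‖ ≥ faceDist C y x * outerFacial (minFace C y) C := by
  intro x hx y hy
  have hconv : Convex ℝ C := hC ▸ convex_convexHull ℝ _
  have hPhi0 : 0 ≤ outerFacial (minFace C y) C :=
    Real.sInf_nonneg (by rintro d ⟨G, H, _, _, _, _, _, rfl⟩; exact setDist'_nonneg G H)
  by_cases hxy : y = x
  · subst hxy
    have h0mem : (0:ℝ) ∈ {γ : ℝ | 0 ≤ γ ∧ ∃ w ∈ C, ∃ u ∈ minFace C y, y - y = γ • (w - u)} :=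
      ⟨le_refl 0, y, hy, y, mem_minFace_self, by simp⟩
    have hfd : faceDist C y y = 0 := le_antisymm
      (csInf_le ⟨0, fun γ hγ => hγ.1⟩ h0mem) (le_csInf ⟨0, h0mem⟩ fun γ hγ => hγ.1)
    rw [ge_iff_le, hfd, zero_mul]
    exact norm_nonneg _
  · have hd : y - x ≠ 0 := sub_ne_zero.2 hxy
    have hdn : 0 < ‖y - x‖ := norm_pos_iff.2 hd
    have hcomp : IsCompact C := hC ▸ V.finite_toSet.isCompact_convexHull ℝ
    obtain ⟨M, hM⟩ := Metric.isBounded_iff.1 hcomp.isBounded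
    have hMn : ∀ a ∈ C, ∀ b ∈ C, ‖a - b‖ ≤ M := fun a ha b hb => by
      rw [← dist_eq_norm]; exact hM ha hb
    set Ky := minFace C y with hKy
    set Kx := minFace C x with hKx
    have hKyC : Ky ⊆ C := minFace_subset hy
    have hKxC : Kx ⊆ C := minFace_subset hx
    have hKycpt : IsCompact Ky := by
      rw [hKy, minFace_eq_hull V hC hy]
      exact (V.finite_toSet.inter_of_left _).isCompact_convexHull ℝ
    have hKxcpt : IsCompact Kx := by
      rw [hKx, minFace_eq_hull V hC hx]
      exact (V.finite_toSet.inter_of_left _).isCompact_convexHull ℝ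
    set R := M / ‖y - x‖ with hR
    set B : Set (ℝ × E × E) := {t | t.1 ∈ Set.Icc 1 R ∧ t.2.1 ∈ Ky ∧ t.2.2 ∈ Kx ∧
      t.2.1 - t.2.2 = t.1 • (y - x)} with hB
    have hmemB : ∀ w u : E, w ∈ Ky → u ∈ Kx → ∀ ρ : ℝ, 1 ≤ ρ → w - u = ρ • (y - x) →
        (ρ, w, u) ∈ B := by
      intro w u hw hu ρ hρ heq
      refine ⟨⟨hρ, ?_⟩, hw, hu, heq⟩
      have h1 : ‖w - u‖ = ρ * ‖y - x‖ := by
        rw [heq, norm_smul, Real.norm_eq_abs, abs_of_pos (by linarith)]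
      have h2 := hMn w (hKyC hw) u (hKxC hu)
      rw [hR, le_div_iff₀ hdn]
      linarith
    have hBc : IsCompact B := by
      have hBeq : B = (Set.Icc (1:ℝ) R ×ˢ (Ky ×ˢ Kx)) ∩
          {t : ℝ × E × E | t.2.1 - t.2.2 - t.1 • (y - x) = 0} := by
        ext t
        simp only [hB, Set.mem_inter_iff, Set.mem_prod, Set.mem_setOf_eq, sub_eq_zero]
        tauto
      rw [hBeq]
      refine (isCompact_Icc.prod (hKycpt.prod hKxcpt)).inter_right
        (isClosed_eq ?_ continuous_const)
      exact ((continuous_snd.fst.sub continuous_snd.snd).sub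
        (continuous_fst.smul continuous_const))
    have h1B : ((1:ℝ), y, x) ∈ B :=
      hmemB y x mem_minFace_self mem_minFace_self 1 le_rfl (by rw [one_smul])
    set A := Prod.fst '' B with hA
    have hAc : IsCompact A := hBc.image continuous_fst
    have hAne : A.Nonempty := ⟨1, _, h1B, rfl⟩
    obtain ⟨⟨ρ, w, u⟩, htB, hρeq⟩ := hAc.sSup_mem hAne
    obtain ⟨⟨hρ1, hρR⟩, hwKy, huKx, heq⟩ := htB
    have hρpos : (0:ℝ) < ρ := lt_of_lt_of_le one_pos hρ1
    have hmax : ∀ t ∈ B, t.1 ≤ ρ := by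
      intro t ht
      have := le_csSup hAc.bddAbove ⟨t, ht, rfl⟩
      rw [← hρeq] at this
      exact this
    have hwC : w ∈ C := hKyC hwKy
    have huC : u ∈ C := hKxC huKx
    have hdisj : minFace C w ∩ minFace C u = ∅ := by
      by_contra hne
      obtain ⟨p, hpG, hpH⟩ := Set.nonempty_iff_ne_empty.2 hne
      have hpC : p ∈ C := minFace_subset hwC hpG
      obtain ⟨ε₁, hε₁, hq₁⟩ := minFace_beyond hconv hwC hpG
      obtain ⟨ε₂, hε₂, hq₂⟩ := minFace_beyond hconv huC hpH
      set ε := min ε₁ ε₂ with hεdef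
      have hε : 0 < ε := lt_min hε₁ hε₂
      have hε1 : (0:ℝ) < 1 + ε := by linarith
      have hw' : w + ε • (w - p) ∈ C := shrink_mem hconv hwC hε (min_le_left _ _) hq₁
      have hu' : u + ε • (u - p) ∈ C := shrink_mem hconv huC hε (min_le_right _ _) hq₂
      have hseg1 : w ∈ openSegment ℝ p (w + ε • (w - p)) := by
        refine ⟨ε / (1 + ε), 1 / (1 + ε), by positivity, by positivity, by field_simp; ring, ?_⟩
        match_scalars <;> field_simp <;> ring
      have hseg2 : u ∈ openSegment ℝ p (u + ε • (u - p)) := by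
        refine ⟨ε / (1 + ε), 1 / (1 + ε), by positivity, by positivity, by field_simp; ring, ?_⟩
        match_scalars <;> field_simp <;> ring
      have hwFy : w + ε • (w - p) ∈ Ky :=
        (isExtreme_minFace hy).right_mem_of_mem_openSegment hpC hw' hwKy hseg1
      have huFx : u + ε • (u - p) ∈ Kx :=
        (isExtreme_minFace hx).right_mem_of_mem_openSegment hpC hu' huKx hseg2
      have heq' : (w + ε • (w - p)) - (u + ε • (u - p)) = ((1 + ε) * ρ) • (y - x) := by
        have hlin : (w + ε • (w - p)) - (u + ε • (u - p)) = (1 + ε) • (w - u) := by module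
        rw [hlin, heq, smul_smul]
      have hnew := hmemB _ _ hwFy huFx ((1 + ε) * ρ) (by nlinarith) heq'
      have hle := hmax _ hnew
      simp only at hle
      nlinarith
    have hwG : w ∈ minFace C w := mem_minFace_self
    have huH : u ∈ minFace C u := mem_minFace_self
    have hGF : IsExtreme ℝ Ky (minFace C w) := by
      constructor
      · exact minFace_subset_of_isExtreme (isExtreme_minFace hy) hwKy
      · intro a ha b hb z hz hseg
        exact (isExtreme_minFace hwC).2 (hKyC ha) (hKyC hb) hz hseg
    have hHext : IsExtreme ℝ C (minFace C u) := isExtreme_minFace huC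
    have hsd1 : setDist' (minFace C w) (minFace C u) ≤ ‖w - u‖ :=
      csInf_le ⟨0, by rintro dd ⟨a, _, b, _, rfl⟩; exact norm_nonneg _⟩ ⟨w, hwG, u, huH, rfl⟩
    have hPhile : outerFacial Ky C ≤ setDist' (minFace C w) (minFace C u) :=
      csInf_le ⟨0, by rintro dd ⟨G', H', _, _, _, _, _, rfl⟩; exact setDist'_nonneg G' H'⟩
        ⟨minFace C w, minFace C u, hGF, ⟨w, hwG⟩, hHext, ⟨u, huH⟩, hdisj, rfl⟩
    have hfd : faceDist C y x ≤ 1 / ρ := by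
      refine csInf_le ⟨0, fun γ hγ => hγ.1⟩ ⟨by positivity, w, hwC, u, huKx, ?_⟩
      rw [heq, smul_smul, one_div, inv_mul_cancel₀ hρpos.ne', one_smul]
    rw [ge_iff_le]
    calc faceDist C y x * outerFacial Ky C ≤ (1 / ρ) * outerFacial Ky C :=
          mul_le_mul_of_nonneg_right hfd hPhi0
      _ ≤ (1 / ρ) * ‖w - u‖ :=
          mul_le_mul_of_nonneg_left (hPhile.trans hsd1) (by positivity)
      _ = ‖y - x‖ := by
          rw [heq, norm_smul, Real.norm_eq_abs, abs_of_pos hρpos]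
          field_simp
end

section
/- Let C ⊆ ℝⁿ be a polytope and f convex and differentiable on an open set containing C with L-curvature (f(x + η(v - x)) ≤ f(x) + η⟨∇f(x), v - x⟩ + Lη²/2 for x ∈ C, v ∈ C, η ∈ [0,1]). Suppose (C, f) satisfies the (μ, 1/2)-error bound relative to the radial distance r. Then the iterates of the vanilla Frank-Wolfe algorithm with short-step satisfy f(x^{(t)}) - f* ≤ (f(x^{(0)}) - f*)(1 - min{μ/(2L), 1/2})^t for all t ∈ ℕ. -/
open Filter Topology

/-- The radial distance on a polytope `C`. -/
noncomputable def radialDist {E : Type*} [NormedAddCommGroup E] [NormedSpace ℝ E]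
    (C : Set E) (y x : E) : ℝ :=
  sInf {ρ : ℝ | 0 ≤ ρ ∧ ∃ v ∈ C, y - x = ρ • (v - x)}

lemma grad_ineq {E : Type*} [NormedAddCommGroup E] [NormedSpace ℝ E]
    {C : Set E} {f : E → ℝ} {φ : E →L[ℝ] ℝ} (hconv : ConvexOn ℝ C f)
    {x z : E} (hx : x ∈ C) (hz : z ∈ C) (hf : HasFDerivAt f φ x) :
    φ (z - x) ≤ f z - f x := by
  set g : ℝ → E := fun t => x + t • (z - x) with hg
  have hline : HasDerivAt g (z - x) 0 := by
    simpa [hg] using (((hasDerivAt_id (0:ℝ)).smul_const (z - x)).const_add x)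
  have hf0 : HasFDerivAt f φ (g 0) := by simpa [hg] using hf
  have hcomp : HasDerivAt (f ∘ g) (φ (z - x)) 0 := hf0.comp_hasDerivAt 0 hline
  have hslope := hasDerivAt_iff_tendsto_slope.mp hcomp
  have hslope' : Tendsto (slope (f ∘ g) 0) (𝓝[>] 0) (𝓝 (φ (z - x))) :=
    hslope.mono_left (nhdsWithin_mono _ (fun t ht => ne_of_gt ht))
  have hbound : ∀ t ∈ Set.Ioc (0:ℝ) 1, slope (f ∘ g) 0 t ≤ f z - f x := by
    intro t ht
    have hcvx := hconv.2 hx hz (by linarith [ht.2] : (0:ℝ) ≤ 1 - t) (le_of_lt ht.1)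
      (by ring)
    have hgt : g t = (1 - t) • x + t • z := by
      simp [hg, smul_sub, sub_smul]; abel
    have : f (g t) ≤ (1 - t) * f x + t * f z := by rw [hgt]; exact hcvx
    rw [slope_def_field]
    have hg0 : (f ∘ g) 0 = f x := by simp [hg]
    rw [hg0]
    have h2 : (f ∘ g) t - f x ≤ t * (f z - f x) := by
      simp only [Function.comp_apply]; nlinarith
    rw [sub_zero, div_le_iff₀ ht.1]
    nlinarith
  exact le_of_tendsto hslope'
    (Filter.eventually_of_mem (Ioc_mem_nhdsGT_of_mem ⟨le_refl 0, one_pos⟩) hbound)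

set_option maxHeartbeats 1000000 in
/-- Linear convergence of the vanilla Frank-Wolfe algorithm with short-step under
`L`-curvature and the `(μ, 1/2)`-error bound relative to the radial distance:
`f(x⁽ᵗ⁾) - f* ≤ (f(x⁽⁰⁾) - f*) (1 - min{μ/(2L), 1/2})ᵗ`. -/
theorem stmt19 {E : Type*} [NormedAddCommGroup E] [NormedSpace ℝ E]
    (V : Finset E) (C : Set E) (hC : C = convexHull ℝ (V : Set E)) (hCne : C.Nonempty)
    (f : E → ℝ) (f' : E → E →L[ℝ] ℝ) (hdiff : ∀ x ∈ C, HasFDerivAt f (f' x) x)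
    (hconv : ConvexOn ℝ C f)
    (fstar : ℝ) (hfstar : IsLeast (f '' C) fstar)
    (Xstar : Set E) (hXstar : Xstar = {z ∈ C | f z = fstar})
    (L : ℝ) (hL : 0 < L)
    (hcurv : ∀ x ∈ C, ∀ u ∈ C, ∀ η ∈ Set.Icc (0 : ℝ) 1,
      f (x + η • (u - x)) ≤ f x + η * f' x (u - x) + L * η ^ 2 / 2)
    (μ : ℝ) (hμ : 0 < μ)
    (heb : ∀ x ∈ C,
      ((f x - fstar) / μ) ^ ((1 : ℝ) / 2) ≥
        sInf {d : ℝ | ∃ z ∈ Xstar, d = radialDist C z x})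
    (x v : ℕ → E) (η : ℕ → ℝ)
    (hx0 : x 0 ∈ C)
    (hv : ∀ t, v t ∈ C ∧ ∀ w ∈ C, f' (x t) (v t) ≤ f' (x t) w)
    (hη : ∀ t, η t = min 1 (f' (x t) (x t - v t) / L))
    (hupd : ∀ t, x (t + 1) = x t + η t • (v t - x t)) :
    ∀ t, f (x t) - fstar ≤
      (f (x 0) - fstar) * (1 - min (μ / (2 * L)) (1 / 2)) ^ t := by
  have hCconv : Convex ℝ C := hC ▸ convex_convexHull ℝ _
  set c : ℝ := min (μ / (2 * L)) (1 / 2) with hc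
  have hc2 : c ≤ 1 / 2 := min_le_right _ _
  have hcμ : c ≤ μ / (2 * L) := min_le_left _ _
  have hcpos : 0 < c := lt_min (by positivity) (by norm_num)
  have h1c : (0:ℝ) ≤ 1 - c := by linarith
  -- a minimizer exists
  obtain ⟨zs, hzsC, hzsf⟩ := hfstar.1
  have hzsX : zs ∈ Xstar := by rw [hXstar]; exact ⟨hzsC, hzsf⟩
  have hlb : ∀ y ∈ C, fstar ≤ f y := fun y hy => hfstar.2 ⟨y, hy, rfl⟩
  -- main induction: membership and decrease
  have key : ∀ t, x t ∈ C ∧ f (x t) - fstar ≤ (f (x 0) - fstar) * (1 - c) ^ t := by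
    intro t
    induction t with
    | zero => exact ⟨hx0, by simp⟩
    | succ t ih =>
      obtain ⟨hxC, hbd⟩ := ih
      have hvC := (hv t).1
      set g : ℝ := f' (x t) (x t - v t) with hgdef
      have hg0 : 0 ≤ g := by
        have := (hv t).2 (x t) hxC
        simp only [hgdef, map_sub]; linarith
      set h : ℝ := f (x t) - fstar with hh
      have hh0 : 0 ≤ h := by have := hlb (x t) hxC; linarith
      -- h ≤ g
      have hhg : h ≤ g := by
        have h1 : f' (x t) (zs - x t) ≤ f zs - f (x t) :=
          grad_ineq hconv hxC hzsC (hdiff _ hxC)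
        have h2 : f' (x t) (v t) ≤ f' (x t) zs := (hv t).2 zs hzsC
        simp only [map_sub] at h1 ⊢
        simp only [hgdef, map_sub, hh]
        linarith [hzsf ▸ h1]
      -- scaling: g^2 ≥ μ * h
      have hscale : μ * h ≤ g ^ 2 := by
        rcases eq_or_lt_of_le hh0 with heq | hpos
        · nlinarith
        · set B : ℝ := (h / μ) ^ ((1:ℝ)/2) with hB
          have hBnn : 0 ≤ B := Real.rpow_nonneg (by positivity) _
          have hB2 : B ^ 2 = h / μ := by
            rw [hB, ← Real.rpow_natCast ((h/μ) ^ ((1:ℝ)/2)) 2,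
              ← Real.rpow_mul (by positivity)]
            norm_num
          -- key estimate: h ≤ (B + ε) * g for all ε > 0
          have hkey : ∀ ε : ℝ, 0 < ε → h ≤ (B + ε) * g := by
            intro ε hε
            have hSne : {d : ℝ | ∃ z ∈ Xstar, d = radialDist C z (x t)}.Nonempty :=
              ⟨radialDist C zs (x t), zs, hzsX, rfl⟩
            have hSinf : sInf {d : ℝ | ∃ z ∈ Xstar, d = radialDist C z (x t)} < B + ε/2 := by
              have := heb (x t) hxC
              rw [← hh] at this
              have : sInf {d : ℝ | ∃ z ∈ Xstar, d = radialDist C z (x t)} ≤ B := this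
              linarith
            obtain ⟨d, ⟨z, hzX, hdz⟩, hdlt⟩ := exists_lt_of_csInf_lt hSne hSinf
            obtain ⟨hzC, hzf⟩ : z ∈ C ∧ f z = fstar := by rwa [hXstar] at hzX
            have hRne : {ρ : ℝ | 0 ≤ ρ ∧ ∃ w ∈ C, z - x t = ρ • (w - x t)}.Nonempty :=
              ⟨1, le_of_lt one_pos, z, hzC, by simp⟩
            have hRlt : sInf {ρ : ℝ | 0 ≤ ρ ∧ ∃ w ∈ C, z - x t = ρ • (w - x t)} < B + ε := by
              rw [hdz] at hdlt; unfold radialDist at hdlt; linarith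
            obtain ⟨ρ, ⟨hρ0, w, hwC, hzw⟩, hρlt⟩ := exists_lt_of_csInf_lt hRne hRlt
            -- h ≤ ρ * g
            have h1 : f' (x t) (z - x t) ≤ f z - f (x t) :=
              grad_ineq hconv hxC hzC (hdiff _ hxC)
            have h2 : f' (x t) (v t) ≤ f' (x t) w := (hv t).2 w hwC
            have h3 : f' (x t) (z - x t) = ρ * f' (x t) (w - x t) := by
              rw [hzw]; simp
            have h4 : -g ≤ f' (x t) (w - x t) := by
              simp only [hgdef, map_sub]; linarith
            have h5 : h ≤ ρ * g := by
              rw [hzf, h3] at h1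
              have h6 := mul_le_mul_of_nonneg_left h4 hρ0
              have h7 : fstar - f (x t) = -h := by rw [hh]; ring
              nlinarith
            have : ρ * g ≤ (B + ε) * g :=
              mul_le_mul_of_nonneg_right (le_of_lt hρlt) hg0
            linarith
          have hhBg : h ≤ B * g := by
            have hgpos : 0 < g := by
              rcases lt_or_ge 0 g with h' | h'
              · exact h'
              · exfalso; have := hkey 1 one_pos; nlinarith
            refine le_of_forall_pos_le_add fun δ hδ => ?_
            have := hkey (δ / g) (by positivity)
            calc h ≤ (B + δ / g) * g := this
              _ = B * g + δ := by field_simp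
          -- square it
          have hsq : h * h ≤ h / μ * g ^ 2 := by
            have := mul_le_mul hhBg hhBg hh0 (by positivity : (0:ℝ) ≤ B * g)
            calc h * h ≤ (B * g) * (B * g) := this
              _ = B ^ 2 * g ^ 2 := by ring
              _ = h / μ * g ^ 2 := by rw [hB2]
          have hsq2 : μ * (h * h) ≤ h * g ^ 2 := by
            have := mul_le_mul_of_nonneg_left hsq (le_of_lt hμ)
            have heq : μ * (h / μ * g ^ 2) = h * g ^ 2 := by field_simp
            exact heq ▸ this
          have : h * (μ * h) ≤ h * g ^ 2 := by nlinarith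
          exact le_of_mul_le_mul_left this hpos
      -- membership of next iterate
      have hηmem : η t ∈ Set.Icc (0:ℝ) 1 := by
        rw [hη t]
        constructor
        · exact le_min zero_le_one (by positivity)
        · exact min_le_left _ _
      have hxC' : x (t + 1) ∈ C := by
        rw [hupd t]
        exact hCconv.add_smul_sub_mem hxC hvC hηmem
      refine ⟨hxC', ?_⟩
      -- descent step
      have hfvx : f' (x t) (v t - x t) = -g := by
        simp only [hgdef, map_sub]; ring
      have hstep : f (x (t+1)) - fstar ≤ (1 - c) * h := by
        have hcu := hcurv (x t) hxC (v t) hvC (η t) hηmem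
        rw [← hupd t, hfvx] at hcu
        rcases le_or_gt 1 (g / L) with hcase | hcase
        · -- η = 1
          have hη1 : η t = 1 := by rw [hη t, min_eq_left hcase]
          rw [hη1] at hcu
          norm_num at hcu
          have hgL : L ≤ g := by rwa [le_div_iff₀ hL, one_mul] at hcase
          have h8 : f (x (t+1)) ≤ f (x t) - h / 2 := by linarith
          have h9 : 0 ≤ (1/2 - c) * h := mul_nonneg (by linarith) hh0
          have h10 : fstar = f (x t) - h := by rw [hh]; ring
          clear_value c g h
          linarith
        · -- η = g / L
          have hηg : η t = g / L := by rw [hη t, min_eq_right (le_of_lt hcase)]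
          rw [hηg] at hcu
          have heq : g / L * (-g) + L * (g / L) ^ 2 / 2 = -(g ^ 2 / (2 * L)) := by
            field_simp; ring
          have h8 : f (x (t+1)) ≤ f (x t) - g ^ 2 / (2 * L) := by linarith
          have hμh : μ * h / (2 * L) ≤ g ^ 2 / (2 * L) :=
            div_le_div_of_nonneg_right hscale (by positivity)
          have hch : c * h ≤ μ / (2 * L) * h := mul_le_mul_of_nonneg_right hcμ hh0
          have h10 : fstar = f (x t) - h := by rw [hh]; ring
          have h11 : μ / (2 * L) * h = μ * h / (2 * L) := by ring
          clear_value c g h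
          linarith
      calc f (x (t+1)) - fstar ≤ (1 - c) * h := hstep
        _ ≤ (1 - c) * ((f (x 0) - fstar) * (1 - c) ^ t) :=
            mul_le_mul_of_nonneg_left hbd h1c
        _ = (f (x 0) - fstar) * (1 - c) ^ (t + 1) := by ring
  exact fun t => (key t).2
end
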